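/- For every real number μ, one has log((1 - i·μ)/(1 + i·μ)) = -2i·arctan(μ), where log is the principal branch of the complex logarithm. Consequently, for a real symmetric n×n matrix s with eigenvalues μ_1,...,μ_n, det Cay(s) = exp(-2i·∑_{j=1}^n arctan μ_j). -/

import Mathlib

open Matrix Complex Polynomial

/-- The Cayley transform of a real symmetric matrix (viewed as a complex matrix). -/
noncomputable def Cay {n : ℕ} (s : Matrix (Fin n) (Fin n) ℝ) : Matrix (Fin n) (Fin n) ℂ :=
  (1 - Complex.I • s.map Complex.ofReal) * (1 + Complex.I • s.map Complex.ofReal)⁻¹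

lemma arctan_exp (μ : ℝ) :
    (1 - Complex.I * μ) / (1 + Complex.I * μ)
      = Complex.exp (-2 * Complex.I * (Real.arctan μ : ℂ)) := by
  set a := Real.arctan μ with ha
  have hden : (1 : ℂ) + Complex.I * μ ≠ 0 := by
    intro h
    have := congrArg Complex.re h
    simp at this
  have hsqpos : (0:ℝ) < Real.sqrt (1 + μ ^ 2) := Real.sqrt_pos.2 (by positivity)
  have hr : ((Real.sqrt (1 + μ ^ 2) : ℝ) : ℂ) ≠ 0 := by exact_mod_cast hsqpos.ne'
  have h1 : Real.cos a = 1 / Real.sqrt (1 + μ ^ 2) := Real.cos_arctan μ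
  have h2 : Real.sin a = μ / Real.sqrt (1 + μ ^ 2) := Real.sin_arctan μ
  have hr2 : ((Real.sqrt (1 + μ ^ 2) : ℝ) : ℂ) ^ 2 = 1 + (μ:ℂ) ^ 2 := by
    have := Real.sq_sqrt (show (0:ℝ) ≤ 1 + μ ^ 2 by positivity)
    exact_mod_cast this
  have h1μ : (1 : ℂ) + (μ:ℂ)^2 ≠ 0 := hr2 ▸ pow_ne_zero 2 hr
  have hexp : Complex.exp (-2 * Complex.I * a)
      = ((Real.cos a : ℂ) - (Real.sin a : ℂ) * Complex.I) ^ 2 := by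
    have h : (-2 : ℂ) * Complex.I * a = (2 : ℕ) * (((-a : ℝ) : ℂ) * Complex.I) := by
      push_cast; ring
    rw [h, Complex.exp_nat_mul, Complex.exp_mul_I]
    push_cast [Complex.cos_neg, Complex.sin_neg]
    ring
  rw [hexp, div_eq_iff hden, h1, h2]
  push_cast
  rw [show (1:ℂ) / (Real.sqrt (1 + μ ^ 2) : ℂ) - (μ:ℂ) / (Real.sqrt (1 + μ ^ 2) : ℂ) * Complex.I
      = (1 - (μ:ℂ) * Complex.I) / (Real.sqrt (1 + μ ^ 2) : ℂ) by ring,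
    div_pow, hr2, div_mul_eq_mul_div, eq_div_iff h1μ]
  linear_combination ((μ:ℂ)^2 - (μ:ℂ)^3 * Complex.I) * Complex.I_sq

lemma eval_charpoly' {n : ℕ} (A : Matrix (Fin n) (Fin n) ℂ) (t : ℂ) :
    A.charpoly.eval t = (t • (1 : Matrix (Fin n) (Fin n) ℂ) - A).det := by
  rw [Matrix.charpoly, ← Polynomial.coe_evalRingHom, RingHom.map_det]
  congr 1
  ext i j
  by_cases h : i = j <;>
    simp [h, Matrix.charmatrix_apply, Matrix.one_apply, Matrix.diagonal_apply]

lemma det_one_pm_smul {n : ℕ} (s : Matrix (Fin n) (Fin n) ℝ) (μ : Fin n → ℝ)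
    (hcp : s.charpoly = ∏ j, (X - C (μ j))) :
    ((1 : Matrix (Fin n) (Fin n) ℂ) - Complex.I • s.map Complex.ofReal).det
        = ∏ j, (1 - Complex.I * (μ j : ℂ)) ∧
    ((1 : Matrix (Fin n) (Fin n) ℂ) + Complex.I • s.map Complex.ofReal).det
        = ∏ j, (1 + Complex.I * (μ j : ℂ)) := by
  set A := s.map (Complex.ofReal) with hA
  have hcpC : A.charpoly = ∏ j, (X - C ((μ j : ℂ))) := by
    have h := Matrix.charpoly_map s Complex.ofRealHom
    rw [hcp, Polynomial.map_prod] at h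
    simp at h
    exact h
  have heval : ∀ t : ℂ, (t • (1 : Matrix (Fin n) (Fin n) ℂ) - A).det = ∏ j, (t - μ j) := by
    intro t
    rw [← eval_charpoly', hcpC]
    simp [Polynomial.eval_prod]
  constructor
  · have h1 : (1 : Matrix (Fin n) (Fin n) ℂ) - Complex.I • A
        = Complex.I • ((- Complex.I) • (1 : Matrix (Fin n) (Fin n) ℂ) - A) := by
      rw [smul_sub, smul_smul]
      simp
    rw [h1, Matrix.det_smul, heval, Fintype.card_fin,
      show (Complex.I ^ n : ℂ) = ∏ _j : Fin n, Complex.I by simp,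
      ← Finset.prod_mul_distrib]
    refine Finset.prod_congr rfl fun j _ => ?_
    linear_combination -Complex.I_sq
  · have h1 : (1 : Matrix (Fin n) (Fin n) ℂ) + Complex.I • A
        = (- Complex.I) • (Complex.I • (1 : Matrix (Fin n) (Fin n) ℂ) - A) := by
      rw [smul_sub, smul_smul]
      simp
    rw [h1, Matrix.det_smul, heval, Fintype.card_fin,
      show ((- Complex.I) ^ n : ℂ) = ∏ _j : Fin n, -Complex.I by simp,
      ← Finset.prod_mul_distrib]
    refine Finset.prod_congr rfl fun j _ => ?_
    linear_combination -Complex.I_sq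

theorem log_cayley_arctan {n : ℕ} :
    (∀ μ : ℝ, Complex.log ((1 - Complex.I * (μ : ℂ)) / (1 + Complex.I * (μ : ℂ)))
        = -2 * Complex.I * (Real.arctan μ : ℂ)) ∧
    (∀ (s : Matrix (Fin n) (Fin n) ℝ), sᵀ = s → ∀ μ : Fin n → ℝ,
      s.charpoly = ∏ j, (X - C (μ j)) →
      (Cay s).det = Complex.exp (-2 * Complex.I * (∑ j, Real.arctan (μ j) : ℝ))) := by
  have hlog : ∀ μ : ℝ, Complex.log ((1 - Complex.I * (μ : ℂ)) / (1 + Complex.I * (μ : ℂ)))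
      = -2 * Complex.I * (Real.arctan μ : ℂ) := by
    intro μ
    rw [arctan_exp μ]
    apply Complex.log_exp
    · simp only [Complex.mul_im, Complex.mul_re, Complex.I_re, Complex.I_im,
        Complex.ofReal_re, Complex.ofReal_im]
      norm_num
      linarith [Real.arctan_lt_pi_div_two μ]
    · simp only [Complex.mul_im, Complex.mul_re, Complex.I_re, Complex.I_im,
        Complex.ofReal_re, Complex.ofReal_im]
      norm_num
      linarith [Real.neg_pi_div_two_lt_arctan μ, Real.pi_pos]
  refine ⟨hlog, fun s _ μ hcp => ?_⟩
  obtain ⟨hdet1, hdet2⟩ := det_one_pm_smul s μ hcp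
  have hne : ∀ j : Fin n, (1 : ℂ) + Complex.I * (μ j : ℂ) ≠ 0 := by
    intro j h
    have := congrArg Complex.re h
    simp at this
  have hQ : ((1 : Matrix (Fin n) (Fin n) ℂ) + Complex.I • s.map Complex.ofReal).det ≠ 0 := by
    rw [hdet2]
    exact Finset.prod_ne_zero_iff.2 fun j _ => hne j
  rw [Cay, Matrix.det_mul, Matrix.det_nonsing_inv, Ring.inverse_eq_inv', hdet1, hdet2,
    ← Finset.prod_inv_distrib, ← Finset.prod_mul_distrib]
  have : ∀ j ∈ (Finset.univ : Finset (Fin n)),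
      (1 - Complex.I * (μ j : ℂ)) * (1 + Complex.I * (μ j : ℂ))⁻¹
        = Complex.exp (-2 * Complex.I * (Real.arctan (μ j) : ℂ)) := by
    intro j _
    rw [← arctan_exp, div_eq_mul_inv]
  rw [Finset.prod_congr rfl this, ← Complex.exp_sum]
  congr 1
  push_cast
  rw [Finset.mul_sum]
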